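/- Let {T0, T1} be a [t]-trade on 2^V with |V| = v. Then the pair {T̂0, T̂1} obtained by replacing every block (x_1,…,x_v) of T0 and of T1 by the 2v-tuple (x_1,…,x_v, x_1+1,…,x_v+1) (appending the complemented tuple) is a t-(2v,v) trade: it is a [t]-trade on the 2v-cube all of whose blocks have size exactly v. -/

import Mathlib

/-- The size (number of ones) of a vector of `F_2^v`. -/
def size {v : ℕ} (x : Fin v → ZMod 2) : ℕ :=
  (Finset.univ.filter (fun j => x j = 1)).card

/-- A `[t]`-trade. -/
def IsTrade (t v : ℕ) (T0 T1 : Finset (Fin v → ZMod 2)) : Prop :=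
  Disjoint T0 T1 ∧
  ∀ s : Fin v → ZMod 2, size s ≤ t →
    (T0.filter (fun x => ∀ j, s j = 1 → x j = 1)).card =
    (T1.filter (fun x => ∀ j, s j = 1 → x j = 1)).card

def cnt {v : ℕ} (T : Finset (Fin v → ZMod 2)) (A B : Finset (Fin v)) : ℕ :=
  (T.filter (fun x => (∀ j ∈ A, x j = 1) ∧ (∀ j ∈ B, x j = 0))).card

lemma zmod2_cases (a : ZMod 2) : a = 0 ∨ a = 1 := by fin_cases a; exacts [Or.inl rfl, Or.inr rfl]

lemma cnt_split {v : ℕ} (T : Finset (Fin v → ZMod 2)) (A B : Finset (Fin v))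
    (a : Fin v) (haA : a ∉ A) (haB : a ∉ B) :
    cnt T A (insert a B) + cnt T (insert a A) B = cnt T A B := by
  classical
  unfold cnt
  rw [← Finset.card_filter_add_card_filter_not
    (p := fun x => x a = 0) (s := T.filter (fun x => (∀ j ∈ A, x j = 1) ∧ (∀ j ∈ B, x j = 0)))]
  rw [Finset.filter_filter, Finset.filter_filter]
  congr 2
  · ext x
    simp only [Finset.mem_filter, Finset.mem_insert]
    constructor
    · rintro ⟨hx, hA, hB⟩
      exact ⟨hx, ⟨hA, fun j hj => hB j (Or.inr hj)⟩, hB a (Or.inl rfl)⟩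
    · rintro ⟨hx, ⟨hA, hB⟩, h0⟩
      exact ⟨hx, hA, fun j hj => by rcases hj with rfl | hj; exacts [h0, hB j hj]⟩
  · ext x
    simp only [Finset.mem_filter, Finset.mem_insert]
    constructor
    · rintro ⟨hx, hA, hB⟩
      have h1 : x a = 1 := hA a (Or.inl rfl)
      refine ⟨hx, ⟨fun j hj => hA j (Or.inr hj), hB⟩, by rw [h1]; decide⟩
    · rintro ⟨hx, ⟨hA, hB⟩, h0⟩
      have h1 : x a = 1 := (zmod2_cases (x a)).resolve_left h0
      exact ⟨hx, fun j hj => by rcases hj with rfl | hj; exacts [h1, hA j hj], hB⟩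

lemma cnt_eq {t v : ℕ} {T0 T1 : Finset (Fin v → ZMod 2)} (h : IsTrade t v T0 T1) :
    ∀ B A : Finset (Fin v), Disjoint A B → A.card + B.card ≤ t →
      cnt T0 A B = cnt T1 A B := by
  classical
  intro B
  induction B using Finset.induction_on with
  | empty =>
    intro A _ hcard
    have key := h.2 (fun j => if j ∈ A then 1 else 0) (by
      unfold size
      have : (Finset.univ.filter (fun j => (if j ∈ A then (1 : ZMod 2) else 0) = 1)) = A := by
        ext j; by_cases hj : j ∈ A <;> simp [hj]
      rw [this]; simpa using hcard)
    unfold cnt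
    have heq : ∀ x : Fin v → ZMod 2,
        ((∀ j ∈ A, x j = 1) ∧ (∀ j ∈ (∅ : Finset (Fin v)), x j = 0)) ↔
        (∀ j, (if j ∈ A then (1 : ZMod 2) else 0) = 1 → x j = 1) := by
      intro x
      constructor
      · rintro ⟨hA, -⟩ j hj
        by_cases hjA : j ∈ A
        · exact hA j hjA
        · simp [hjA] at hj
      · intro hall
        exact ⟨fun j hj => hall j (by simp [hj]), by simp⟩
    rw [Finset.filter_congr (fun x _ => heq x), Finset.filter_congr (fun x _ => heq x)]
    exact key
  | insert _ _ ha ih =>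
    rename_i a B
    intro A hdisj hcard
    have haA : a ∉ A := fun hmem => (Finset.disjoint_left.mp hdisj hmem) (Finset.mem_insert_self a B)
    have hAB : Disjoint A B := hdisj.mono_right (Finset.subset_insert a B)
    have hcard' : A.card + B.card ≤ t := by
      rw [Finset.card_insert_of_notMem ha] at hcard; omega
    have hcard'' : (insert a A).card + B.card ≤ t := by
      rw [Finset.card_insert_of_notMem haA]
      rw [Finset.card_insert_of_notMem ha] at hcard; omega
    have hAaB : Disjoint (insert a A) B := by
      rw [Finset.disjoint_left]
      intro x hx hxB
      rcases Finset.mem_insert.mp hx with rfl | hx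
      · exact ha hxB
      · exact Finset.disjoint_left.mp hAB hx hxB
    have e0 := cnt_split T0 A B a haA ha
    have e1 := cnt_split T1 A B a haA ha
    have i1 := ih A hAB hcard'
    have i2 := ih (insert a A) hAaB hcard''
    omega

lemma phi_inj {v : ℕ} : Function.Injective
    (fun x : Fin v → ZMod 2 => Fin.append x (fun j => x j + 1)) := by
  intro x y hxy
  funext j
  have := congrFun hxy (Fin.castAdd v j)
  simpa [Fin.append_left] using this

/-- replacing every block `(x_1,…,x_v)` of a `[t]`-trade by the
`2v`-tuple `(x_1,…,x_v,x_1+1,…,x_v+1)` yields a `t-(2v,v)` trade: a `[t]`-trade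
on the `2v`-cube all of whose blocks have size exactly `v`. -/
theorem tTrade_double (v t : ℕ) (T0 T1 : Finset (Fin v → ZMod 2))
    (h : IsTrade t v T0 T1) :
    IsTrade t (v + v)
      (T0.image (fun x => Fin.append x (fun j => x j + 1)))
      (T1.image (fun x => Fin.append x (fun j => x j + 1))) ∧
    ∀ y ∈ T0.image (fun x => Fin.append x (fun j => x j + 1)) ∪
          T1.image (fun x => Fin.append x (fun j => x j + 1)),
      size y = v := by
  classical
  set φ := fun x : Fin v → ZMod 2 => Fin.append x (fun j => x j + 1) with hφ
  constructor
  · constructor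
    · exact (Finset.disjoint_image phi_inj).mpr h.1
    · intro s hs
      -- define A, B
      set A : Finset (Fin v) := Finset.univ.filter (fun j => s (Fin.castAdd v j) = 1) with hA
      set B : Finset (Fin v) := Finset.univ.filter (fun j => s (Fin.natAdd v j) = 1) with hB
      have hpred : ∀ x : Fin v → ZMod 2,
          (∀ j, s j = 1 → φ x j = 1) ↔ ((∀ j ∈ A, x j = 1) ∧ (∀ j ∈ B, x j = 0)) := by
        intro x
        constructor
        · intro hall
          constructor
          · intro j hj
            have := hall (Fin.castAdd v j) (by simpa [hA] using hj)
            simpa [hφ, Fin.append_left] using this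
          · intro j hj
            have := hall (Fin.natAdd v j) (by simpa [hB] using hj)
            simp only [hφ, Fin.append_right] at this
            rcases zmod2_cases (x j) with h0 | h1
            · exact h0
            · rw [h1] at this; exact absurd this (by decide)
        · rintro ⟨hAx, hBx⟩ j hj
          induction j using Fin.addCases with
          | left i =>
            simp only [hφ, Fin.append_left]
            exact hAx i (by simp [hA, hj])
          | right i =>
            simp only [hφ, Fin.append_right]
            rw [hBx i (by
              simp only [hB, Finset.mem_filter, Finset.mem_univ, true_and]; exact hj)]
            decide
      have himg : ∀ T : Finset (Fin v → ZMod 2),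
          ((T.image φ).filter (fun x => ∀ j, s j = 1 → x j = 1)).card = cnt T A B := by
        intro T
        rw [Finset.filter_image, Finset.card_image_of_injective _ phi_inj]
        unfold cnt
        congr 1
        exact Finset.filter_congr (fun x _ => by simpa using hpred x)
      rw [himg, himg]
      by_cases hdisj : Disjoint A B
      · apply cnt_eq h B A hdisj
        -- card bound
        have hsub : A.map (Fin.castAddEmb v) ∪ B.map (Fin.natAddEmb v) ⊆
            Finset.univ.filter (fun j => s j = 1) := by
          intro j hj
          rcases Finset.mem_union.mp hj with hj | hj
          · obtain ⟨i, hi, rfl⟩ := Finset.mem_map.mp hj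
            simp only [hA, Finset.mem_filter, Finset.mem_univ, true_and] at hi
            exact Finset.mem_filter.mpr ⟨Finset.mem_univ _, hi⟩
          · obtain ⟨i, hi, rfl⟩ := Finset.mem_map.mp hj
            simp only [hB, Finset.mem_filter, Finset.mem_univ, true_and] at hi
            exact Finset.mem_filter.mpr ⟨Finset.mem_univ _, hi⟩
        have hd : Disjoint (A.map (Fin.castAddEmb v)) (B.map (Fin.natAddEmb v)) := by
          rw [Finset.disjoint_left]
          rintro j hj hj'
          obtain ⟨i, -, rfl⟩ := Finset.mem_map.mp hj
          obtain ⟨i', -, hii⟩ := Finset.mem_map.mp hj'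
          have : v + (i' : ℕ) = (i : ℕ) := by
            have := congrArg Fin.val hii
            exact this
          have hi : (i : ℕ) < v := i.isLt
          omega
        have := Finset.card_le_card hsub
        rw [Finset.card_union_of_disjoint hd, Finset.card_map, Finset.card_map] at this
        calc A.card + B.card ≤ _ := this
          _ = size s := rfl
          _ ≤ t := hs
      · -- some j in both: counts are 0
        obtain ⟨a, haA, haB⟩ := Finset.not_disjoint_iff.mp hdisj
        have hz : ∀ T : Finset (Fin v → ZMod 2), cnt T A B = 0 := by
          intro T
          unfold cnt
          rw [Finset.card_eq_zero, Finset.filter_eq_empty_iff]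
          rintro x - ⟨h1, h0⟩
          have := h1 a haA
          rw [h0 a haB] at this
          exact absurd this (by decide)
        rw [hz, hz]
  · intro y hy
    have : ∃ x, y = φ x := by
      rcases Finset.mem_union.mp hy with hy | hy <;>
        · obtain ⟨x, -, rfl⟩ := Finset.mem_image.mp hy; exact ⟨x, rfl⟩
    obtain ⟨x, rfl⟩ := this
    unfold size
    rw [Finset.card_filter]
    rw [Fin.sum_univ_add]
    simp only [hφ, Fin.append_left, Fin.append_right]
    rw [← Finset.sum_add_distrib]
    have h2 : ∀ a : ZMod 2,
        ((if a = 1 then 1 else 0) + (if a + 1 = 1 then 1 else 0) : ℕ) = 1 := by decide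
    simp only [h2]
    simp
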